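/- Any two closed discs are compatible: For all x, y ∈ ℂ and all r, s > 0, the set {z : |z − y| ≤ s} \ {z : |z − x| < r} (the closed disc around y with the open disc around x removed) is a preconnected subset of ℂ. -/

import Mathlib

open Metric

open Complex

lemma normSq_polar (ρ θ d : ℝ) :
    Complex.normSq ((ρ:ℂ) * Complex.exp (θ * Complex.I) - d) =
      ρ^2 - 2*ρ*d*Real.cos θ + d^2 := by
  simp [Complex.normSq_apply, Complex.exp_mul_I, Complex.ext_iff,
    Complex.cos_ofReal_re, Complex.sin_ofReal_re]
  nlinarith [Real.sin_sq_add_cos_sq θ]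

lemma mem_iff_polar (d s r ρ θ : ℝ) (hs : 0 ≤ s) (hρ0 : 0 ≤ ρ) :
    (ρ:ℂ) * Complex.exp (θ * Complex.I) ∈ closedBall (d:ℂ) s \ ball 0 r ↔
      r ≤ ρ ∧ ρ^2 + d^2 - s^2 ≤ 2*ρ*d*Real.cos θ := by
  have habs : ‖(ρ:ℂ) * Complex.exp (θ * Complex.I)‖ = ρ := by
    simp [Complex.norm_exp_ofReal_mul_I, _root_.abs_of_nonneg hρ0]
  have hsq : ‖(ρ:ℂ) * Complex.exp (θ * Complex.I) - d‖^2
      = ρ^2 - 2*ρ*d*Real.cos θ + d^2 := by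
    rw [Complex.sq_norm, normSq_polar]
  constructor
  · rintro ⟨h1, h2⟩
    have h1' : ‖(ρ:ℂ) * Complex.exp (θ * Complex.I) - d‖ ≤ s := by
      simpa [Complex.dist_eq] using h1
    have h2' : r ≤ ρ := by
      simp only [mem_ball, Complex.dist_eq, sub_zero, not_lt, habs] at h2
      linarith
    have habsnn := norm_nonneg ((ρ:ℂ) * Complex.exp (θ * Complex.I) - d)
    refine ⟨h2', ?_⟩
    nlinarith
  · rintro ⟨h1, h2⟩
    constructor
    · rw [mem_closedBall, Complex.dist_eq]
      have : ‖(ρ:ℂ) * Complex.exp (θ * Complex.I) - d‖^2 ≤ s^2 := by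
        rw [hsq]; linarith
      nlinarith [norm_nonneg ((ρ:ℂ) * Complex.exp (θ * Complex.I) - d)]
    · simp only [mem_ball, Complex.dist_eq, sub_zero, not_lt, habs]
      linarith

lemma cos_mono_aux {a b : ℝ} (hab : |a| ≤ |b|) (hb : |b| ≤ Real.pi) :
    Real.cos b ≤ Real.cos a := by
  rw [← Real.cos_abs a, ← Real.cos_abs b]
  exact Real.cos_le_cos_of_nonneg_of_le_pi (abs_nonneg a) hb hab

lemma annulus_like_isPreconnected (d r s : ℝ) (hd : 0 ≤ d) (hr : 0 < r) (hs : 0 < s) :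
    IsPreconnected (closedBall (d:ℂ) s \ ball 0 r) := by
  set S := closedBall (d:ℂ) s \ ball 0 r with hS
  apply isPreconnected_of_forall_pair
  intro z hz w hw
  -- polar data
  have hzpol : (↑‖z‖) * Complex.exp ((Complex.arg z) * Complex.I) = z :=
    Complex.norm_mul_exp_arg_mul_I z
  have hwpol : (↑‖w‖) * Complex.exp ((Complex.arg w) * Complex.I) = w :=
    Complex.norm_mul_exp_arg_mul_I w
  have hz' := (mem_iff_polar d s r ‖z‖ (Complex.arg z) hs.le
    (norm_nonneg z)).mp (by rw [hzpol]; exact hz)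
  have hw' := (mem_iff_polar d s r ‖w‖ (Complex.arg w) hs.le
    (norm_nonneg w)).mp (by rw [hwpol]; exact hw)
  obtain ⟨hz1, hz2⟩ := hz'
  obtain ⟨hw1, hw2⟩ := hw'
  set ρz := ‖z‖
  set ρw := ‖w‖
  -- define the three connecting pieces
  set A₁ : Set ℂ := (fun t : ℝ => (ρz : ℂ) * Complex.exp ((t * Complex.arg z) * Complex.I)) '' Set.Icc 0 1 with hA₁
  set A₂ : Set ℂ := (fun t : ℝ => (ρw : ℂ) * Complex.exp ((t * Complex.arg w) * Complex.I)) '' Set.Icc 0 1 with hA₂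
  set L : Set ℂ := (fun t : ℝ => (t : ℂ)) '' Set.Icc (min ρz ρw) (max ρz ρw) with hL
  have harcsub : ∀ (ρ θ : ℝ), r ≤ ρ → ρ^2 + d^2 - s^2 ≤ 2*ρ*d*Real.cos θ → |θ| ≤ Real.pi →
      ∀ t ∈ Set.Icc (0:ℝ) 1, (ρ : ℂ) * Complex.exp ((t * θ) * Complex.I) ∈ S := by
    intro ρ θ h1 h2 hθ t ht
    rw [show ((t:ℂ) * (θ:ℂ)) = (((t*θ : ℝ)):ℂ) by push_cast; ring]
    refine (mem_iff_polar d s r ρ (t * θ) hs.le (le_trans hr.le h1)).mpr ⟨h1, ?_⟩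
    have hcos : Real.cos θ ≤ Real.cos (t * θ) := by
      apply cos_mono_aux _ hθ
      rw [abs_mul]
      calc |t| * |θ| ≤ 1 * |θ| := by
            apply mul_le_mul_of_nonneg_right _ (abs_nonneg θ)
            rw [abs_le]; constructor <;> linarith [ht.1, ht.2]
        _ = |θ| := one_mul _
    have hρd : 0 ≤ 2 * ρ * d := by
      have hρ0 : (0:ℝ) ≤ ρ := le_trans hr.le h1
      positivity
    nlinarith
  have hA₁sub : A₁ ⊆ S := by
    rintro _ ⟨t, ht, rfl⟩
    exact harcsub ρz (Complex.arg z) hz1 hz2 (Complex.abs_arg_le_pi z) t ht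
  have hA₂sub : A₂ ⊆ S := by
    rintro _ ⟨t, ht, rfl⟩
    exact harcsub ρw (Complex.arg w) hw1 hw2 (Complex.abs_arg_le_pi w) t ht
  -- real points
  have hreal : ∀ ρ : ℝ, r ≤ ρ → (ρ - d)^2 ≤ s^2 → (ρ : ℂ) ∈ S := by
    intro ρ h1 h2
    have h := (mem_iff_polar d s r ρ 0 hs.le (le_trans hr.le h1)).mpr
      ⟨h1, by rw [Real.cos_zero]; nlinarith⟩
    rw [show ((ρ:ℝ):ℂ) = (ρ:ℂ) * Complex.exp (((0:ℝ):ℂ) * Complex.I) by simp]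
    exact h
  have hz2' : (ρz - d)^2 ≤ s^2 := by
    have hc := Real.cos_le_one (Complex.arg z)
    have : 0 ≤ 2 * ρz * d := by positivity
    nlinarith
  have hw2' : (ρw - d)^2 ≤ s^2 := by
    have hc := Real.cos_le_one (Complex.arg w)
    have : 0 ≤ 2 * ρw * d := by positivity
    nlinarith
  have hLsub : L ⊆ S := by
    rintro _ ⟨ρ, hρ, rfl⟩
    have h1 : r ≤ ρ := le_trans (le_min hz1 hw1) hρ.1
    apply hreal ρ h1
    have ha : min ρz ρw ≤ ρ := hρ.1
    have hb : ρ ≤ max ρz ρw := hρ.2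
    have hmin : (min ρz ρw - d)^2 ≤ s^2 := by
      rcases le_total ρz ρw with h | h
      · rw [min_eq_left h]; exact hz2'
      · rw [min_eq_right h]; exact hw2'
    have hmax : (max ρz ρw - d)^2 ≤ s^2 := by
      rcases le_total ρz ρw with h | h
      · rw [max_eq_right h]; exact hw2'
      · rw [max_eq_left h]; exact hz2'
    rcases le_total ρ d with h | h <;> nlinarith
  -- preconnectedness of pieces
  have hpc : ∀ (ρ θ : ℝ), IsPreconnected
      ((fun t : ℝ => (ρ : ℂ) * Complex.exp ((t * θ) * Complex.I)) '' Set.Icc 0 1) := by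
    intro ρ θ
    apply IsPreconnected.image isPreconnected_Icc
    exact (continuous_const.mul (Complex.continuous_exp.comp
      ((Complex.continuous_ofReal.mul continuous_const).mul continuous_const))).continuousOn
  have hLpc : IsPreconnected L := by
    apply IsPreconnected.image isPreconnected_Icc
    exact Complex.continuous_ofReal.continuousOn
  -- memberships
  have hzA₁ : z ∈ A₁ := ⟨1, by norm_num,
    by simp only [Complex.ofReal_one, one_mul]; exact hzpol⟩
  have hwA₂ : w ∈ A₂ := ⟨1, by norm_num,
    by simp only [Complex.ofReal_one, one_mul]; exact hwpol⟩
  have hρzA₁ : (ρz : ℂ) ∈ A₁ := ⟨0, ⟨le_refl 0, zero_le_one⟩, by simp⟩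
  have hρwA₂ : (ρw : ℂ) ∈ A₂ := ⟨0, ⟨le_refl 0, zero_le_one⟩, by simp⟩
  have hρzL : (ρz : ℂ) ∈ L := ⟨ρz, ⟨min_le_left _ _, le_max_left _ _⟩, rfl⟩
  have hρwL : (ρw : ℂ) ∈ L := ⟨ρw, ⟨min_le_right _ _, le_max_right _ _⟩, rfl⟩
  refine ⟨A₁ ∪ L ∪ A₂, ?_, ?_, ?_, ?_⟩
  · exact Set.union_subset (Set.union_subset hA₁sub hLsub) hA₂sub
  · exact Or.inl (Or.inl hzA₁)
  · exact Or.inr hwA₂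
  · apply IsPreconnected.union ((ρw : ℂ)) (Or.inr hρwL) hρwA₂
    · exact IsPreconnected.union ((ρz : ℂ)) hρzA₁ hρzL (hpc ρz (Complex.arg z)) hLpc
    · exact hpc ρw (Complex.arg w)

/-- Any two closed discs are compatible: a closed disc with an open disc removed is
preconnected. -/
theorem closedBall_diff_ball_isPreconnected (x y : ℂ) (r s : ℝ)
    (hr : 0 < r) (hs : 0 < s) :
    IsPreconnected (Metric.closedBall y s \ Metric.ball x r) := by
  set d := dist x y with hdd
  have hd : 0 ≤ d := dist_nonneg
  set c : ℂ := if h : d = 0 then 1 else (y - x) / d with hcdef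
  have habsyx : ‖y - x‖ = d := by
    rw [hdd, dist_comm, Complex.dist_eq]
  have hc : ‖c‖ = 1 := by
    rw [hcdef]
    split_ifs with h
    · simp
    · rw [norm_div, habsyx]
      rw [Complex.norm_of_nonneg hd, div_self h]
  have hc0 : c ≠ 0 := by
    intro h0
    rw [h0] at hc; simp at hc
  have hcd : c * d = y - x := by
    rw [hcdef]
    split_ifs with h
    · have : y = x := by
        have := dist_eq_zero.mp (hdd ▸ h)
        exact this.symm
      simp [h, this]
    · rw [div_mul_cancel₀]
      exact_mod_cast h
  have himg : Metric.closedBall y s \ Metric.ball x r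
      = (fun w => c * w + x) '' (Metric.closedBall (d:ℂ) s \ Metric.ball 0 r) := by
    ext z
    simp only [Set.mem_image, Set.mem_diff, Metric.mem_closedBall, Metric.mem_ball,
      Complex.dist_eq, not_lt, sub_zero]
    constructor
    · rintro ⟨h1, h2⟩
      refine ⟨(z - x) / c, ⟨?_, ?_⟩, by field_simp; ring⟩
      · have : (z - x) / c - (d:ℂ) = (z - y) / c := by
          rw [eq_div_iff hc0, sub_mul, div_mul_cancel₀ _ hc0, mul_comm (d:ℂ) c, hcd]
          ring
        rw [this, norm_div, hc, div_one]
        exact h1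
      · rw [norm_div, hc, div_one]
        exact h2
    · rintro ⟨w, ⟨h1, h2⟩, rfl⟩
      constructor
      · have : c * w + x - y = c * (w - d) := by
          linear_combination hcd
        rw [this, norm_mul, hc, one_mul]
        exact h1
      · rw [show c * w + x - x = c * w by ring, norm_mul, hc, one_mul]
        exact h2
  rw [himg]
  exact (annulus_like_isPreconnected d r s hd hr hs).image _
    ((continuous_const.mul continuous_id').add continuous_const).continuousOn
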